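/- Let K be a perfect field of characteristic 2 and V an n-dimensional vector space over K with n even. Then there are exactly two equivalence classes of non-degenerate symmetric bilinear forms on V: one class consisting of forms whose Gram matrix (in some basis) has at least one nonzero diagonal entry (containing the identity matrix 1_n), and the other consisting of forms with identically zero diagonal (containing the anti-diagonal matrix with 1's). -/

import Mathlib

open LinearMap (BilinForm)
open Module Submodule

universe u v

section Helpers

variable {K : Type u} {V : Type v} [Field K] [AddCommGroup V] [Module K V]

/-- A family with a "dual family" w.r.t. a bilinear form is linearly independent. -/
lemma linearIndependent_of_dual {ι : Type*} [Fintype ι] [DecidableEq ι]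
    (B : BilinForm K V) (f g : ι → V)
    (h : ∀ i j, B (f i) (g j) = if i = j then 1 else 0) :
    LinearIndependent K f := by
  rw [Fintype.linearIndependent_iff]
  intro c hc j
  have h2 : B (∑ i, c i • f i) (g j) = 0 := by rw [hc]; simp
  rw [LinearMap.BilinForm.sum_left] at h2
  simp only [LinearMap.BilinForm.smul_left, h, mul_ite, mul_one, mul_zero] at h2
  rwa [Finset.sum_ite_eq' Finset.univ j c, if_pos (Finset.mem_univ j)] at h2

lemma restrict_orthogonal_nondeg [FiniteDimensional K V] {B : BilinForm K V}
    (hB : B.Nondegenerate) (hs : B.IsRefl) (W : Submodule K V)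
    (hW : (B.restrict W).Nondegenerate) :
    (B.restrict (B.orthogonal W)).Nondegenerate := by
  apply B.nondegenerate_restrict_of_disjoint_orthogonal hs
  rw [LinearMap.BilinForm.orthogonal_orthogonal hB hs]
  exact (LinearMap.BilinForm.isCompl_orthogonal_of_restrict_nondegenerate hs hW).disjoint.symm

lemma exists_equiv_of_grams_eq {ι : Type*} (B B' : BilinForm K V)
    (b b' : Basis ι K V) (h : ∀ i j, B' (b' i) (b' j) = B (b i) (b j)) :
    ∃ M : V ≃ₗ[K] V, ∀ x y, B' x y = B (M x) (M y) := by
  refine ⟨b'.equiv b (Equiv.refl ι), ?_⟩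
  have key : B' = B.compl₁₂ (b'.equiv b (Equiv.refl ι)).toLinearMap
      (b'.equiv b (Equiv.refl ι)).toLinearMap := by
    apply b'.ext; intro i; apply b'.ext; intro j
    simp only [LinearMap.compl₁₂_apply, LinearEquiv.coe_coe, Basis.equiv_apply, Equiv.refl_apply]
    exact h i j
  intro x y
  conv_lhs => rw [key]
  rfl

end Helpers

variable {K : Type u} [Field K]

set_option maxHeartbeats 1000000 in
lemma symplectic_aux (n : ℕ) :
    ∀ (V : Type v) [AddCommGroup V] [Module K V] [FiniteDimensional K V],
    finrank K V = n → ∀ B : BilinForm K V, B.IsSymm → (∀ x, B x x = 0) → B.Nondegenerate →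
    ∃ (m : ℕ) (b : Basis (Fin m ⊕ Fin m) K V),
      (∀ i j, B (b (Sum.inl i)) (b (Sum.inl j)) = 0) ∧
      (∀ i j, B (b (Sum.inr i)) (b (Sum.inr j)) = 0) ∧
      (∀ i j, B (b (Sum.inl i)) (b (Sum.inr j)) = if i = j then 1 else 0) := by
  induction n using Nat.strong_induction_on with
  | _ n ih =>
  intro V _ _ _ hn B hsym halt hnd
  classical
  have hsymm : ∀ a b : V, B a b = B b a := fun a b => by simpa using hsym.eq a b
  rcases subsingleton_or_nontrivial V with hV | hV
  · exact ⟨0, Basis.empty V, fun i _ => Fin.elim0 i, fun i _ => Fin.elim0 i,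
      fun i _ => Fin.elim0 i⟩
  obtain ⟨x, hx0⟩ := exists_ne (0 : V)
  have hex : ¬ ∀ y, B x y = 0 := fun h => hx0 (hnd.1 x h)
  push_neg at hex
  obtain ⟨y0, hy0⟩ := hex
  obtain ⟨y, hxy⟩ : ∃ y, B x y = 1 :=
    ⟨(B x y0)⁻¹ • y0, by rw [LinearMap.BilinForm.smul_right, inv_mul_cancel₀ hy0]⟩
  have hyx : B y x = 1 := by rw [hsymm y x, hxy]
  set P : Submodule K V := span K {x, y} with hPdef
  have hxP : x ∈ P := subset_span (Set.mem_insert _ _)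
  have hyP : y ∈ P := subset_span (Set.mem_insert_of_mem _ rfl)
  have hPnd : (B.restrict P).Nondegenerate := by
    refine (LinearMap.IsRefl.nondegenerate_iff_separatingLeft (B := B.restrict P)
      (fun (a b : P) h => hsym.isRefl a.1 b.1 h)).mpr ?_
    rintro ⟨z, hz⟩ h
    obtain ⟨a, b, rfl⟩ := Submodule.mem_span_pair.mp hz
    have h1 : B (a • x + b • y) x = 0 := h ⟨x, hxP⟩
    have h2 : B (a • x + b • y) y = 0 := h ⟨y, hyP⟩
    rw [map_add, map_smul, map_smul, LinearMap.add_apply, LinearMap.smul_apply,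
      LinearMap.smul_apply, halt x, hyx, smul_eq_mul, smul_eq_mul, mul_zero, mul_one,
      zero_add] at h1
    rw [map_add, map_smul, map_smul, LinearMap.add_apply, LinearMap.smul_apply,
      LinearMap.smul_apply, hxy, halt y, smul_eq_mul, smul_eq_mul, mul_zero, mul_one,
      add_zero] at h2
    simp [h1, h2]
  have hcompl := LinearMap.BilinForm.isCompl_orthogonal_of_restrict_nondegenerate
    hsym.isRefl hPnd
  set C : Submodule K V := B.orthogonal P with hCdef
  have hCnd : (B.restrict C).Nondegenerate :=
    restrict_orthogonal_nondeg hnd hsym.isRefl P hPnd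
  have hCsym : (B.restrict C).IsSymm := ⟨fun a b => hsym.eq a.1 b.1⟩
  have hCalt : ∀ z : C, (B.restrict C) z z = 0 := fun z => halt z.1
  -- linear independence of x, y
  have hxyli : LinearIndependent K ![x, y] := by
    apply linearIndependent_of_dual B ![x, y] ![y, x]
    intro i j
    fin_cases i <;> fin_cases j <;>
      simp [hxy, hyx, halt]
  have hPrank : finrank K P = 2 := by
    have h1 := finrank_span_eq_card hxyli
    have h2 : Set.range ![x, y] = {x, y} := by
      ext z; simp [Fin.exists_fin_two]; tauto
    rw [h2] at h1
    rw [hPdef, h1]; rfl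
  have hranks : finrank K P + finrank K C = n := by
    rw [← hn]; exact Submodule.finrank_add_eq_of_isCompl hcompl
  have hCrank : finrank K C = n - 2 := by omega
  obtain ⟨m, b', h1, h2, h3⟩ := ih (n - 2) (by omega) C hCrank (B.restrict C) hCsym hCalt hCnd
  have hCx : ∀ c : C, B x (c : V) = 0 := fun c =>
    (LinearMap.BilinForm.mem_orthogonal_iff.mp c.2) x hxP
  have hxC : ∀ c : C, B (c : V) x = 0 := fun c => by rw [hsymm]; exact hCx c
  have hCy : ∀ c : C, B y (c : V) = 0 := fun c =>
    (LinearMap.BilinForm.mem_orthogonal_iff.mp c.2) y hyP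
  have hyC : ∀ c : C, B (c : V) y = 0 := fun c => by rw [hsymm]; exact hCy c
  have hres : ∀ a b : C, B (a : V) (b : V) = (B.restrict C) a b := fun a b => rfl
  set u : Fin (m + 1) → V := Fin.cons x (fun i => (b' (Sum.inl i) : V)) with hu
  set v : Fin (m + 1) → V := Fin.cons y (fun i => (b' (Sum.inr i) : V)) with hv
  have hu0 : u 0 = x := by rw [hu]; simp
  have hus : ∀ i, u i.succ = (b' (Sum.inl i) : V) := fun i => by rw [hu]; simp
  have hv0 : v 0 = y := by rw [hv]; simp
  have hvs : ∀ i, v i.succ = (b' (Sum.inr i) : V) := fun i => by rw [hv]; simp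
  have huu : ∀ i j, B (u i) (u j) = 0 := by
    intro i j
    refine Fin.cases ?_ (fun i' => ?_) i <;> refine Fin.cases ?_ (fun j' => ?_) j
    · rw [hu0]; exact halt x
    · rw [hu0, hus]; exact hCx _
    · rw [hu0, hus]; exact hxC _
    · rw [hus, hus, hres]; exact h1 i' j'
  have hvv : ∀ i j, B (v i) (v j) = 0 := by
    intro i j
    refine Fin.cases ?_ (fun i' => ?_) i <;> refine Fin.cases ?_ (fun j' => ?_) j
    · rw [hv0]; exact halt y
    · rw [hv0, hvs]; exact hCy _
    · rw [hv0, hvs]; exact hyC _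
    · rw [hvs, hvs, hres]; exact h2 i' j'
  have huv : ∀ i j, B (u i) (v j) = if i = j then 1 else 0 := by
    intro i j
    refine Fin.cases ?_ (fun i' => ?_) i <;> refine Fin.cases ?_ (fun j' => ?_) j
    · rw [hu0, hv0, if_pos rfl]; exact hxy
    · rw [hu0, hvs, if_neg (Fin.succ_ne_zero _).symm]; exact hCx _
    · rw [hus, hv0, if_neg (Fin.succ_ne_zero _)]; exact hyC _
    · rw [hus, hvs, hres, h3 i' j']
      simp [Fin.succ_inj]
  have hvu : ∀ i j, B (v i) (u j) = if i = j then 1 else 0 := by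
    intro i j
    rw [hsymm, huv]; simp [eq_comm]
  -- linear independence of the joint family
  have hli : LinearIndependent K (Sum.elim u v) := by
    apply linearIndependent_of_dual B (Sum.elim u v) (Sum.elim v u)
    rintro (i | i) (j | j) <;> simp [huu, hvv, huv, hvu]
  have hcard : Fintype.card (Fin (m + 1) ⊕ Fin (m + 1)) = finrank K V := by
    have := finrank_eq_card_basis b'
    simp only [Fintype.card_sum, Fintype.card_fin] at this ⊢
    omega
  let b : Basis (Fin (m + 1) ⊕ Fin (m + 1)) K V :=
    basisOfLinearIndependentOfCardEqFinrank hli hcard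
  have hb : ∀ k, b k = Sum.elim u v k := fun k => by
    rw [show (b : _ → V) = Sum.elim u v from
      coe_basisOfLinearIndependentOfCardEqFinrank hli hcard]
  exact ⟨m + 1, b, fun i j => by rw [hb, hb]; exact huu i j,
    fun i j => by rw [hb, hb]; exact hvv i j,
    fun i j => by rw [hb, hb]; exact huv i j⟩
set_option maxHeartbeats 1600000 in
lemma orthonormal_aux [PerfectField K] [CharP K 2] (n : ℕ) :
    ∀ (V : Type v) [AddCommGroup V] [Module K V] [FiniteDimensional K V],
    finrank K V = n → ∀ B : BilinForm K V, B.IsSymm → (∃ x, B x x ≠ 0) → B.Nondegenerate →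
    ∃ b : Basis (Fin n) K V, ∀ i j, B (b i) (b j) = if i = j then 1 else 0 := by
  haveI : Fact (Nat.Prime 2) := ⟨Nat.prime_two⟩
  induction n using Nat.strong_induction_on with
  | _ n ih =>
  intro V _ _ _ hn B hsym hex hnd
  classical
  have hsymm : ∀ a b : V, B a b = B b a := fun a b => by simpa using hsym.eq a b
  have h2K : (1 : K) + 1 = 0 := CharTwo.add_self_eq_zero 1
  obtain ⟨x, hx⟩ := hex
  haveI : ExpChar K 2 := ExpChar.prime Nat.prime_two
  obtain ⟨e, hee⟩ : ∃ e : V, B e e = 1 := by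
    obtain ⟨β, hβ⟩ := surjective_frobenius K 2 (B x x)
    have hβ' : β * β = B x x := by rwa [frobenius_def, pow_two] at hβ
    have hβ0 : β ≠ 0 := by rintro rfl; rw [mul_zero] at hβ'; exact hx hβ'.symm
    refine ⟨β⁻¹ • x, ?_⟩
    rw [LinearMap.BilinForm.smul_left, LinearMap.BilinForm.smul_right, ← hβ']
    field_simp
  have he0 : e ≠ 0 := fun h => by rw [h] at hee; simp at hee
  have hxe : ¬B.IsOrtho e e := by
    rw [LinearMap.BilinForm.isOrtho_def, hee]; exact one_ne_zero
  have hcompl := LinearMap.BilinForm.isCompl_span_singleton_orthogonal hxe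
  set C : Submodule K V := B.orthogonal (K ∙ e) with hC
  have hCnd : (B.restrict C).Nondegenerate :=
    LinearMap.BilinForm.restrict_nondegenerate_orthogonal_spanSingleton B hnd hsym.isRefl hxe
  have hCsym : (B.restrict C).IsSymm := ⟨fun a b => hsym.eq a.1 b.1⟩
  have hCe : ∀ c : C, B e (c : V) = 0 := fun c =>
    (LinearMap.BilinForm.mem_orthogonal_iff.mp c.2) e (Submodule.mem_span_singleton_self e)
  have heC : ∀ c : C, B (c : V) e = 0 := fun c => by rw [hsymm]; exact hCe c
  have hrank : 1 + finrank K C = n := by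
    rw [← hn, ← Submodule.finrank_add_eq_of_isCompl hcompl, finrank_span_singleton he0]
  by_cases hCa : ∀ z : C, (B.restrict C) z z = 0
  · -- complement alternating: use symplectic basis and the char-2 trick
    obtain ⟨m, b', h1, h2, h3⟩ := symplectic_aux (finrank K C) C rfl (B.restrict C) hCsym hCa hCnd
    have hCrank : finrank K C = m + m := by rw [finrank_eq_card_basis b']; simp
    set u : Fin m → V := fun i => (b' (Sum.inl i) : V) with hu
    set v : Fin m → V := fun i => (b' (Sum.inr i) : V) with hv
    have huu : ∀ i j, B (u i) (u j) = 0 := fun i j => h1 i j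
    have hvv : ∀ i j, B (v i) (v j) = 0 := fun i j => h2 i j
    have huv : ∀ i j, B (u i) (v j) = if i = j then 1 else 0 := fun i j => h3 i j
    have hvu : ∀ i j, B (v i) (u j) = if i = j then 1 else 0 := fun i j => by
      rw [hsymm, huv]; simp [eq_comm]
    have heu : ∀ i, B e (u i) = 0 := fun i => hCe _
    have hue : ∀ i, B (u i) e = 0 := fun i => heC _
    have hev : ∀ i, B e (v i) = 0 := fun i => hCe _
    have hve : ∀ i, B (v i) e = 0 := fun i => heC _
    set w : Fin m → V := fun k => u k + v k with hw
    have hww : ∀ k l, B (w k) (w l) = 0 := by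
      intro k l
      rw [hw]
      simp only [map_add, LinearMap.add_apply, huu, hvv, huv, hvu]
      rcases eq_or_ne k l with rfl | hkl
      · simp [h2K]
      · simp [hkl]
    have hwu : ∀ k j, B (w k) (u j) = if k = j then 1 else 0 := by
      intro k j; rw [hw]
      simp only [map_add, LinearMap.add_apply, huu, hvu, zero_add]
    have hwv : ∀ k j, B (w k) (v j) = if k = j then 1 else 0 := by
      intro k j; rw [hw]
      simp only [map_add, LinearMap.add_apply, hvv, huv, add_zero]
    have huw : ∀ j k, B (u j) (w k) = if j = k then 1 else 0 := by
      intro j k; rw [hw]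
      simp only [map_add, huu, huv, zero_add]
    have hvw : ∀ j k, B (v j) (w k) = if j = k then 1 else 0 := by
      intro j k; rw [hw]
      simp only [map_add, hvv, hvu, add_zero]
    have hew : ∀ k, B e (w k) = 0 := by
      intro k; rw [hw]; simp only [map_add, heu, hev, add_zero]
    have hwe : ∀ k, B (w k) e = 0 := by
      intro k; rw [hw]; simp only [map_add, LinearMap.add_apply, hue, hve, add_zero]
    set S : ℕ → V := fun t => ∑ k ∈ Finset.univ.filter (fun k : Fin m => (k : ℕ) < t), w k
      with hS
    have hSS : ∀ s t, B (S s) (S t) = 0 := by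
      intro s t; rw [hS]; simp only
      rw [LinearMap.BilinForm.sum_left]
      refine Finset.sum_eq_zero fun k _ => ?_
      rw [LinearMap.BilinForm.sum_right]
      exact Finset.sum_eq_zero fun l _ => hww k l
    have hSu : ∀ t (j : Fin m), B (S t) (u j) = if (j : ℕ) < t then 1 else 0 := by
      intro t j; rw [hS]; simp only
      rw [LinearMap.BilinForm.sum_left, Finset.sum_congr rfl fun k _ => hwu k j,
        Finset.sum_ite_eq' _ j]
      simp
    have hSv : ∀ t (j : Fin m), B (S t) (v j) = if (j : ℕ) < t then 1 else 0 := by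
      intro t j; rw [hS]; simp only
      rw [LinearMap.BilinForm.sum_left, Finset.sum_congr rfl fun k _ => hwv k j,
        Finset.sum_ite_eq' _ j]
      simp
    have huS : ∀ (j : Fin m) t, B (u j) (S t) = if (j : ℕ) < t then 1 else 0 := by
      intro j t; rw [hS]; simp only
      rw [LinearMap.BilinForm.sum_right, Finset.sum_congr rfl fun k _ => huw j k,
        Finset.sum_ite_eq _ j]
      simp
    have hvS : ∀ (j : Fin m) t, B (v j) (S t) = if (j : ℕ) < t then 1 else 0 := by
      intro j t; rw [hS]; simp only
      rw [LinearMap.BilinForm.sum_right, Finset.sum_congr rfl fun k _ => hvw j k,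
        Finset.sum_ite_eq _ j]
      simp
    have heS : ∀ t, B e (S t) = 0 := by
      intro t; rw [hS]; simp only
      rw [LinearMap.BilinForm.sum_right]
      exact Finset.sum_eq_zero fun k _ => hew k
    have hSe : ∀ t, B (S t) e = 0 := by
      intro t; rw [hS]; simp only
      rw [LinearMap.BilinForm.sum_left]
      exact Finset.sum_eq_zero fun k _ => hwe k
    have hexp : ∀ (s t : ℕ) (z z' : V), B e z' = 0 → B z e = 0 →
        B (e + S s + z) (e + S t + z') = 1 + (B (S s) z' + (B z (S t) + B z z')) := by
      intro s t z z' hz' hz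
      simp only [map_add, LinearMap.add_apply, hee, hSS, heS, hSe, hz', hz, add_zero, zero_add]
      ring
    set a : Fin m → V := fun i => e + S i + u i with ha
    set c : Fin m → V := fun i => e + S i + v i with hc
    set g : Option (Fin m ⊕ Fin m) → V :=
      fun o => Option.elim o (e + S m + 0) (Sum.elim a c) with hg
    have hgn : g none = e + S m + 0 := rfl
    have hgl : ∀ i, g (some (Sum.inl i)) = e + S (i : ℕ) + u i := fun i => rfl
    have hgr : ∀ i, g (some (Sum.inr i)) = e + S (i : ℕ) + v i := fun i => rfl
    have hB00 : B (0 : V) e = 0 := by simp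
    have hBe0 : B e (0 : V) = 0 := by simp
    have hrel : ∀ k l, B (g k) (g l) = if k = l then 1 else 0 := by
      rintro (_ | (k | k)) (_ | (l | l))
      · rw [hgn, hexp _ _ _ _ hBe0 hB00]; simp
      · rw [hgn, hgl, hexp _ _ _ _ (heu l) hB00, hSu]
        simp [Fin.is_lt, h2K]
      · rw [hgn, hgr, hexp _ _ _ _ (hev l) hB00, hSv]
        simp [Fin.is_lt, h2K]
      · rw [hgl, hgn, hexp _ _ _ _ hBe0 (hue k), huS]
        simp [Fin.is_lt, h2K]
      · rw [hgl, hgl, hexp _ _ _ _ (heu l) (hue k), hSu, huS, huu]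
        simp only [Option.some.injEq, Sum.inl.injEq, Fin.ext_iff]
        split_ifs <;> first | (exfalso; omega) | ring1 | linear_combination h2K
      · rw [hgl, hgr, hexp _ _ _ _ (hev l) (hue k), hSv, huS, huv]
        have hne : (some (Sum.inl k) : Option (Fin m ⊕ Fin m)) ≠ some (Sum.inr l) := by simp
        rw [if_neg hne]
        simp only [Fin.ext_iff]
        split_ifs <;> first | (exfalso; omega) | ring1 | linear_combination h2K
      · rw [hgr, hgn, hexp _ _ _ _ hBe0 (hve k), hvS]
        simp [Fin.is_lt, h2K]
      · rw [hgr, hgl, hexp _ _ _ _ (heu l) (hve k), hSu, hvS, hvu]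
        have hne : (some (Sum.inr k) : Option (Fin m ⊕ Fin m)) ≠ some (Sum.inl l) := by simp
        rw [if_neg hne]
        simp only [Fin.ext_iff]
        split_ifs <;> first | (exfalso; omega) | ring1 | linear_combination h2K
      · rw [hgr, hgr, hexp _ _ _ _ (hev l) (hve k), hSv, hvS, hvv]
        simp only [Option.some.injEq, Sum.inr.injEq, Fin.ext_iff]
        split_ifs <;> first | (exfalso; omega) | ring1 | linear_combination h2K
    have hli := linearIndependent_of_dual B g g hrel
    have hcard : Fintype.card (Option (Fin m ⊕ Fin m)) = finrank K V := by
      simp only [Fintype.card_option, Fintype.card_sum, Fintype.card_fin]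
      rw [hn]; omega
    have hcard2 : Fintype.card (Fin n) = Fintype.card (Option (Fin m ⊕ Fin m)) := by
      simp only [Fintype.card_option, Fintype.card_sum, Fintype.card_fin]
      omega
    set σ : Fin n ≃ Option (Fin m ⊕ Fin m) := Fintype.equivOfCardEq hcard2 with hσ
    set b : Basis (Option (Fin m ⊕ Fin m)) K V :=
      basisOfLinearIndependentOfCardEqFinrank hli hcard with hb
    have hbc : ∀ k, b k = g k := fun k => by
      rw [hb, show ((basisOfLinearIndependentOfCardEqFinrank hli hcard : Basis _ K V) : _ → V)
        = g from coe_basisOfLinearIndependentOfCardEqFinrank hli hcard]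
    refine ⟨b.reindex σ.symm, ?_⟩
    intro i j
    rw [Basis.reindex_apply, Basis.reindex_apply, Equiv.symm_symm, hbc, hbc, hrel]
    simp [EmbeddingLike.apply_eq_iff_eq]
  · -- complement not alternating: recurse
    push_neg at hCa
    obtain ⟨b', hb'⟩ := ih (finrank K C) (by omega) C rfl (B.restrict C) hCsym hCa hCnd
    set f : Fin (finrank K C + 1) → V := Fin.cons e (fun i => (b' i : V)) with hf
    have hf0 : f 0 = e := by rw [hf]; simp
    have hfs : ∀ i, f i.succ = (b' i : V) := fun i => by rw [hf]; simp
    have hrel : ∀ i j, B (f i) (f j) = if i = j then 1 else 0 := by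
      intro i j
      refine Fin.cases ?_ (fun i' => ?_) i <;> refine Fin.cases ?_ (fun j' => ?_) j
      · rw [hf0, if_pos rfl]; exact hee
      · rw [hf0, hfs, if_neg (Fin.succ_ne_zero _).symm]; exact hCe _
      · rw [hfs, hf0, if_neg (Fin.succ_ne_zero _)]; exact heC _
      · rw [hfs, hfs, show B (b' i' : V) (b' j' : V) = (B.restrict C) (b' i') (b' j') from rfl,
          hb' i' j']
        simp [Fin.succ_inj]
    have hli := linearIndependent_of_dual B f f hrel
    have hcard : Fintype.card (Fin (finrank K C + 1)) = finrank K V := by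
      rw [Fintype.card_fin, hn]; omega
    have hcn : finrank K C + 1 = n := by omega
    set b : Basis (Fin (finrank K C + 1)) K V :=
      basisOfLinearIndependentOfCardEqFinrank hli hcard with hb
    have hbc : ∀ k, b k = f k := fun k => by
      rw [hb, show ((basisOfLinearIndependentOfCardEqFinrank hli hcard : Basis _ K V) : _ → V)
        = f from coe_basisOfLinearIndependentOfCardEqFinrank hli hcard]
    refine ⟨b.reindex (finCongr hcn), ?_⟩
    intro i j
    rw [Basis.reindex_apply, Basis.reindex_apply, hbc, hbc, hrel]
    simp [Fin.ext_iff]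

lemma exists_nonalt (V : Type v) [AddCommGroup V] [Module K V] [FiniteDimensional K V]
    (hpos : 0 < finrank K V) :
    ∃ B : BilinForm K V, B.IsSymm ∧ B.Nondegenerate ∧ ∃ x : V, B x x ≠ 0 := by
  classical
  set b : Basis (Fin (finrank K V)) K V := Module.finBasis K V with hbdef
  set B : BilinForm K V := ∑ i, LinearMap.smulRight (b.coord i) (b.coord i) with hBdef
  have happ : ∀ x y, B x y = ∑ i, b.coord i x * b.coord i y := by
    intro x y
    rw [hBdef]
    simp [LinearMap.sum_apply, LinearMap.smulRight_apply, smul_eq_mul]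
  have hcb : ∀ i j, b.coord i (b j) = if j = i then 1 else 0 := fun i j => by
    simp [Basis.coord_apply, Basis.repr_self, Finsupp.single_apply]
  have hsymB : B.IsSymm := by
    rw [LinearMap.BilinForm.isSymm_def]
    intro x y
    simp only [RingHom.id_apply, happ]
    exact Finset.sum_congr rfl fun i _ => mul_comm _ _
  have hndB : B.Nondegenerate := by
    refine (LinearMap.IsRefl.nondegenerate_iff_separatingLeft (B := B) hsymB.isRefl).mpr ?_
    intro x hx
    have hcoord : ∀ j, b.repr x j = 0 := by
      intro j
      have hj := hx (b j)
      rw [happ, Finset.sum_eq_single j (fun i _ hij => by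
        rw [hcb, if_neg (fun h => hij h.symm), mul_zero])
        (fun h => absurd (Finset.mem_univ j) h)] at hj
      rw [hcb, if_pos rfl, mul_one, Basis.coord_apply] at hj
      exact hj
    exact b.ext_elem fun i => by rw [hcoord, map_zero, Finsupp.zero_apply]
  refine ⟨B, hsymB, hndB, b ⟨0, hpos⟩, ?_⟩
  rw [happ, Finset.sum_eq_single (⟨0, hpos⟩ : Fin (finrank K V)) (fun i _ hij => by
    rw [hcb, if_neg (fun h => hij h.symm), mul_zero])
    (fun h => absurd (Finset.mem_univ _) h)]
  rw [hcb, if_pos rfl, mul_one]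
  exact one_ne_zero

lemma exists_alt [CharP K 2] (V : Type v) [AddCommGroup V] [Module K V] [FiniteDimensional K V]
    (m : ℕ) (hm : finrank K V = m + m) :
    ∃ B : BilinForm K V, B.IsSymm ∧ B.Nondegenerate ∧ ∀ x : V, B x x = 0 := by
  classical
  set bb : Basis (Fin m ⊕ Fin m) K V :=
    (Module.finBasis K V).reindex ((finCongr hm).trans finSumFinEquiv.symm) with hbbdef
  set B : BilinForm K V := ∑ i : Fin m,
    (LinearMap.smulRight (bb.coord (Sum.inl i)) (bb.coord (Sum.inr i)) +
     LinearMap.smulRight (bb.coord (Sum.inr i)) (bb.coord (Sum.inl i))) with hBdef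
  have happ : ∀ x y, B x y = ∑ i : Fin m,
      (bb.coord (Sum.inl i) x * bb.coord (Sum.inr i) y +
       bb.coord (Sum.inr i) x * bb.coord (Sum.inl i) y) := by
    intro x y
    rw [hBdef]
    simp [LinearMap.sum_apply, LinearMap.smulRight_apply, smul_eq_mul]
  have hcb : ∀ (k l : Fin m ⊕ Fin m), bb.coord k (bb l) = if l = k then 1 else 0 :=
    fun k l => by simp [Basis.coord_apply, Basis.repr_self, Finsupp.single_apply]
  have hsymB : B.IsSymm := by
    rw [LinearMap.BilinForm.isSymm_def]
    intro x y
    simp only [RingHom.id_apply, happ]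
    exact Finset.sum_congr rfl fun i _ => by ring
  have halt : ∀ x, B x x = 0 := by
    intro x
    rw [happ]
    exact Finset.sum_eq_zero fun i _ => by
      rw [mul_comm]; exact CharTwo.add_self_eq_zero _
  have hndB : B.Nondegenerate := by
    refine (LinearMap.IsRefl.nondegenerate_iff_separatingLeft (B := B) hsymB.isRefl).mpr ?_
    intro x hx
    have hcoord : ∀ k, bb.repr x k = 0 := by
      have hl : ∀ j, bb.repr x (Sum.inl j) = 0 := by
        intro j
        have hj := hx (bb (Sum.inr j))
        rw [happ, Finset.sum_eq_single j (fun i _ hij => by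
          rw [hcb, hcb, if_neg (by simp [Ne.symm hij]), if_neg (by simp), mul_zero, mul_zero,
            add_zero])
          (fun h => absurd (Finset.mem_univ j) h)] at hj
        rw [hcb, hcb, if_pos rfl, if_neg (by simp), mul_one, mul_zero, add_zero,
          Basis.coord_apply] at hj
        exact hj
      have hr : ∀ j, bb.repr x (Sum.inr j) = 0 := by
        intro j
        have hj := hx (bb (Sum.inl j))
        rw [happ, Finset.sum_eq_single j (fun i _ hij => by
          rw [hcb, hcb, if_neg (by simp), if_neg (by simp [Ne.symm hij]), mul_zero, mul_zero,
            add_zero])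
          (fun h => absurd (Finset.mem_univ j) h)] at hj
        rw [hcb, hcb, if_neg (by simp), if_pos rfl, mul_zero, mul_one, zero_add,
          Basis.coord_apply] at hj
        exact hj
      rintro (j | j)
      · exact hl j
      · exact hr j
    exact bb.ext_elem fun i => by rw [hcoord, map_zero, Finsupp.zero_apply]
  exact ⟨B, hsymB, hndB, halt⟩

/-- Over a perfect field of characteristic 2, on an even-dimensional vector space,
there are exactly two equivalence classes of non-degenerate symmetric bilinear forms:
two such forms are equivalent iff they agree on the property of having identically zero
diagonal (i.e. `B x x = 0` for all `x`), and both classes are nonempty: one contains a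
form with some nonzero "diagonal" value (e.g. the one with Gram matrix `1ₙ`), and the
other a form with identically zero diagonal. -/
theorem even_dim_two_classes_nondeg_symm_bilin
    (K V : Type*) [Field K] [PerfectField K] [CharP K 2]
    [AddCommGroup V] [Module K V] [FiniteDimensional K V]
    (n : ℕ) (hn : Even n) (hpos : 0 < n) (hdim : Module.finrank K V = n) :
    (∀ B B' : LinearMap.BilinForm K V,
      B.IsSymm → B'.IsSymm → B.Nondegenerate → B'.Nondegenerate →
      ((∃ M : V ≃ₗ[K] V, ∀ x y : V, B' x y = B (M x) (M y)) ↔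
        ((∀ x : V, B x x = 0) ↔ (∀ x : V, B' x x = 0)))) ∧
    (∃ B : LinearMap.BilinForm K V, B.IsSymm ∧ B.Nondegenerate ∧ ∃ x : V, B x x ≠ 0) ∧
    (∃ B : LinearMap.BilinForm K V, B.IsSymm ∧ B.Nondegenerate ∧ ∀ x : V, B x x = 0) := by
  classical
  obtain ⟨m, hm⟩ := hn
  refine ⟨?_, exists_nonalt V (by omega), exists_alt V m (by omega)⟩
  intro B B' hB hB' hndB hndB'
  constructor
  · rintro ⟨M, hM⟩
    constructor
    · intro h x
      exact (hM x x).trans (h _)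
    · intro h x
      have h2 := hM (M.symm x) (M.symm x)
      rw [M.apply_symm_apply] at h2
      rw [← h2]
      exact h _
  · intro hiff
    by_cases halt : ∀ x : V, B x x = 0
    · have halt' : ∀ x : V, B' x x = 0 := hiff.mp halt
      obtain ⟨k, b, h1, h2, h3⟩ := symplectic_aux (finrank K V) V rfl B hB halt hndB
      obtain ⟨k', b', h1', h2', h3'⟩ := symplectic_aux (finrank K V) V rfl B' hB' halt' hndB'
      have hk : k = k' := by
        have e1 := finrank_eq_card_basis b
        have e2 := finrank_eq_card_basis b'
        simp only [Fintype.card_sum, Fintype.card_fin] at e1 e2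
        omega
      subst hk
      apply exists_equiv_of_grams_eq B B' b b'
      have s1 : ∀ a c : V, B a c = B c a := fun a c => by simpa using hB.eq a c
      have s2 : ∀ a c : V, B' a c = B' c a := fun a c => by simpa using hB'.eq a c
      rintro (i | i) (j | j)
      · rw [h1', h1]
      · rw [h3', h3]
      · rw [s2 (b' (Sum.inr i)) (b' (Sum.inl j)), s1 (b (Sum.inr i)) (b (Sum.inl j)), h3', h3]
      · rw [h2', h2]
    · have halt' : ¬ ∀ x : V, B' x x = 0 := fun h => halt (hiff.mpr h)
      push_neg at halt halt'
      obtain ⟨b, hb⟩ := orthonormal_aux (finrank K V) V rfl B hB halt hndB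
      obtain ⟨b', hb'⟩ := orthonormal_aux (finrank K V) V rfl B' hB' halt' hndB'
      exact exists_equiv_of_grams_eq B B' b b' (fun i j => by rw [hb, hb'])
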